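/- Let I be a monomial ideal of Borel type in S = k[x_1,...,x_n] with sequential chain I = I_0 ⊆ I_1 ⊆ ... ⊆ I_r = S defined by I_{l+1} = I_l : x_{n_l}^∞ where n_l = m(I_l). Then r ≤ n and n ≥ n_0 > n_1 > ... > n_{r−1}, and the set of associated primes of S/I is exactly { (x_1,...,x_{n_l}) : l = 0,...,r−1 }. -/

import Mathlib

open MvPolynomial DirectSum

noncomputable section




variable {k : Type} [Field k] {n : ℕ}

/-- The maximal graded ideal `(x_1, …, x_n)` of `k[x_1,…,x_n]`. -/
def maxIdeal (k : Type) [Field k] (n : ℕ) : Ideal (MvPolynomial (Fin n) k) :=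
  Ideal.span (Set.range X)

/-- The "infinite colon" `I : J^∞ = ⋃_t (I : J^t)`. -/
def infColon (I J : Ideal (MvPolynomial (Fin n) k)) : Ideal (MvPolynomial (Fin n) k) :=
  ⨆ t : ℕ, Submodule.colon I ↑(J ^ t)

/-- The saturation `I^{sat} = I : m^∞`. -/
def satur (I : Ideal (MvPolynomial (Fin n) k)) : Ideal (MvPolynomial (Fin n) k) :=
  infColon I (maxIdeal k n)

/-- A monomial ideal: an ideal generated by monomials. -/
def IsMonomialIdeal (I : Ideal (MvPolynomial (Fin n) k)) : Prop :=
  ∃ A : Set (Fin n →₀ ℕ), I = Ideal.span ((fun u => monomial u (1 : k)) '' A)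

/-- `I` is of Borel type: `I : (x_1,…,x_i)^∞ = I : x_i^∞` for all `i`. -/
def IsBorelType (I : Ideal (MvPolynomial (Fin n) k)) : Prop :=
  ∀ i : Fin n,
    infColon I (Ideal.span {f | ∃ j ≤ i, f = X j}) = infColon I (Ideal.span {X i})

/-- Total degree of an exponent vector. -/
def expDeg (u : Fin n →₀ ℕ) : ℕ := u.sum fun _ e => e

/-- The truncated ideal `I_{≥ e}`, generated by all monomials of degree `≥ e` lying in `I`. -/
def truncGE (I : Ideal (MvPolynomial (Fin n) k)) (e : ℕ) : Ideal (MvPolynomial (Fin n) k) :=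
  Ideal.span {f | ∃ u : Fin n →₀ ℕ, monomial u (1 : k) ∈ I ∧ e ≤ expDeg u ∧ f = monomial u (1 : k)}

/-- A stable monomial ideal: for every monomial `x^u ∈ I` with largest variable `x_j`
dividing it and every `i < j`, also `x_i x^u / x_j ∈ I`. -/
def IsStable (I : Ideal (MvPolynomial (Fin n) k)) : Prop :=
  ∀ u : Fin n →₀ ℕ, monomial u (1 : k) ∈ I →
    ∀ j : Fin n, j ∈ u.support → (∀ l ∈ u.support, l ≤ j) →
      ∀ i : Fin n, i < j →
        monomial (u - Finsupp.single j 1 + Finsupp.single i 1) (1 : k) ∈ I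

/-- The set of (exponent vectors of) minimal monomial generators of a monomial ideal. -/
def minGens (I : Ideal (MvPolynomial (Fin n) k)) : Set (Fin n →₀ ℕ) :=
  {u | monomial u (1 : k) ∈ I ∧ ∀ v : Fin n →₀ ℕ, monomial v (1 : k) ∈ I → v ≤ u → v = u}

/-- The irreducible monomial ideal `m^b = (x_i^{b_i} : b_i ≥ 1)`. -/
def irredPow (k : Type) [Field k] {n : ℕ} (b : Fin n →₀ ℕ) : Ideal (MvPolynomial (Fin n) k) :=
  Ideal.span {f | ∃ i : Fin n, 1 ≤ b i ∧ f = (X i : MvPolynomial (Fin n) k) ^ b i}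





/-- The product of the variables indexed by `F`. -/
def varProd (k : Type) [Field k] {n : ℕ} (F : Finset (Fin n)) : MvPolynomial (Fin n) k :=
  ∏ i ∈ F, X i

variable (M : Type) [AddCommGroup M] [Module (MvPolynomial (Fin n) k) M]

variable (k) in
/-- The localization of `M` at the product of the variables indexed by `F`. -/
abbrev locAt' (F : Finset (Fin n)) : Type :=
  LocalizedModule (Submonoid.powers (varProd k F)) M

variable (k n) in
/-- The `p`-th term of the Čech complex. -/
abbrev cechC (p : ℕ) : Type :=
  DirectSum {F : Finset (Fin n) // F.card = p} (fun F => locAt' k M F.1)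

lemma commute_aux {A : Type} [Ring A] {a b : A} (h : Commute a b) (hu : IsUnit (a * b)) :
    IsUnit a := by
  refine isUnit_iff_exists.mpr ⟨b * ↑hu.unit⁻¹, ?_, ?_⟩
  · rw [← mul_assoc]
    simpa using hu.unit.mul_inv
  · have hc : Commute a (↑hu.unit : A) := by
      have : (↑hu.unit : A) = a * b := hu.unit_spec
      rw [this]
      exact (Commute.refl a).mul_right h
    have hc' : Commute a (↑hu.unit⁻¹ : A) := hc.units_inv_right
    calc b * ↑hu.unit⁻¹ * a = b * (a * ↑hu.unit⁻¹) := by rw [mul_assoc, hc'.eq]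
    _ = (a * b) * ↑hu.unit⁻¹ := by rw [← mul_assoc]; exact congrArg (· * _) h.eq.symm
    _ = 1 := by simpa using hu.unit.mul_inv

lemma isUnit_algebraMap_end (u v w : MvPolynomial (Fin n) k) (hw : w = u * v)
    (s : Submonoid.powers u) :
    IsUnit ((algebraMap (MvPolynomial (Fin n) k)
      (Module.End (MvPolynomial (Fin n) k)
        (LocalizedModule (Submonoid.powers w) M))) s) := by
  subst hw
  obtain ⟨t, ht⟩ := s.2
  have h1 : IsUnit ((algebraMap (MvPolynomial (Fin n) k)
      (Module.End (MvPolynomial (Fin n) k)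
        (LocalizedModule (Submonoid.powers (u * v)) M))) ((u * v) ^ t)) :=
    IsLocalizedModule.map_units
      (LocalizedModule.mkLinearMap (Submonoid.powers (u * v)) M)
      (⟨(u * v) ^ t, ⟨t, rfl⟩⟩ : Submonoid.powers (u * v))
  have h2 : (u * v) ^ t = (s : MvPolynomial (Fin n) k) * v ^ t := by
    rw [mul_pow]; simp only [ht]
  rw [h2, map_mul] at h1
  exact commute_aux ((Commute.all _ _).map _) h1

/-- The canonical map between localizations of `M` for `F ⊆ G`. -/
def locMap (F G : Finset (Fin n)) (h : F ⊆ G) :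
    locAt' k M F →ₗ[MvPolynomial (Fin n) k] locAt' k M G := by
  refine LocalizedModule.lift _
    (LocalizedModule.mkLinearMap (Submonoid.powers (varProd k G)) M) ?_
  intro s
  have hFG : varProd k G = varProd k F * varProd k (G \ F) := by
    rw [varProd, varProd, varProd, ← Finset.prod_sdiff h, mul_comm]
  exact isUnit_algebraMap_end M _ _ _ hFG s

set_option maxHeartbeats 1000000 in
variable (k n) in
/-- The Čech differential. -/
def cechD (p : ℕ) : cechC k n M p →ₗ[MvPolynomial (Fin n) k] cechC k n M (p + 1) :=
  DirectSum.toModule (MvPolynomial (Fin n) k) _ (cechC k n M (p + 1)) (fun F =>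
    ∑ j : Fin n,
      if h : j ∈ F.1 then 0 else
        ((-1 : ℤ) ^ ((F.1.filter (· < j)).card)) •
          ((DirectSum.lof (MvPolynomial (Fin n) k) {G : Finset (Fin n) // G.card = p + 1}
              (fun G => locAt' k M G.1)
              ⟨insert j F.1, by rw [Finset.card_insert_of_notMem h, F.2]⟩).comp
            (locMap M F.1 (insert j F.1) (Finset.subset_insert _ _))))


variable (k n) in
/-- The cocycles at Čech degree `p`, as an additive subgroup. -/
def cechZ (p : ℕ) : AddSubgroup (cechC k n M p) :=
  AddMonoidHom.ker (cechD k n M p).toAddMonoidHom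

variable (k n) in
/-- The coboundaries at Čech degree `p`, as an additive subgroup. -/
def cechB (p : ℕ) : AddSubgroup (cechC k n M p) :=
  Nat.casesOn (motive := fun p => AddSubgroup (cechC k n M p)) p ⊥
    (fun q => AddMonoidHom.range (G := cechC k n M q) (N := cechC k n M (q + 1))
      ((cechD k n M q).toAddMonoidHom))

variable (k n) in
/-- The `p`-th (Čech) local cohomology of `M` with respect to the maximal graded
ideal: cocycles modulo coboundaries. -/
abbrev cechH (p : ℕ) : Type :=
  (cechZ k n M p) ⧸ ((cechB k n M p).addSubgroupOf (cechZ k n M p))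

variable (dg : ℤ → AddSubgroup M)

/-- The degree-`j` part of the localization of `M` at `x_F`, induced by a grading `dg`
of `M`: it is generated by the fractions `m / x_F^t` with `m` homogeneous of degree
`j + t·|F|`. -/
def locDeg (F : Finset (Fin n)) (j : ℤ) : AddSubgroup (locAt' k M F) :=
  AddSubgroup.closure
    {z | ∃ (t : ℕ) (m : M), m ∈ dg (j + t * F.card) ∧
      z = LocalizedModule.mk m (⟨varProd k F ^ t, ⟨t, rfl⟩⟩ : Submonoid.powers (varProd k F))}

variable (k n) in
/-- The degree-`j` part of the `p`-th Čech term. -/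
def cechDeg (p : ℕ) (j : ℤ) : AddSubgroup (cechC k n M p) where
  carrier := {x | ∀ F, x F ∈ locDeg M dg F.1 j}
  zero_mem' := by intro F; rw [DirectSum.zero_apply]; exact zero_mem _
  add_mem' := by intro a b ha hb F; rw [DirectSum.add_apply]; exact add_mem (ha F) (hb F)
  neg_mem' := by intro a ha F; rw [DFinsupp.neg_apply]; exact neg_mem (ha F)

variable (k n) in
/-- The degree-`j` part of the `p`-th local cohomology of `M`. -/
def cechHdeg (p : ℕ) (j : ℤ) : AddSubgroup (cechH k n M p) :=
  AddSubgroup.map (QuotientAddGroup.mk' ((cechB k n M p).addSubgroupOf (cechZ k n M p)))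
    ((cechDeg k n M dg p j).comap (cechZ k n M p).subtype)

variable (k n) in
/-- `a_i(M) = max{ j : H_m^i(M)_j ≠ 0 }`, as an extended real (`⊥ = -∞` if the
local cohomology vanishes). -/
def aInv (i : ℕ) : EReal :=
  sSup {x : EReal | ∃ j : ℤ, cechHdeg k n M dg i j ≠ ⊥ ∧ x = ((j : ℝ) : EReal)}

variable (k n) in
/-- The partial regularity `reg_t(M) = max{ a_i(M) + i : i ≤ t }`. -/
def regT (t : ℕ) : EReal :=
  sSup {x : EReal | ∃ i ≤ t, x = aInv k n M dg i + ((i : ℝ) : EReal)}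

variable (k n) in
/-- `a*_t(M) = max{ a_i(M) : i ≤ t }`. -/
def aStarT (t : ℕ) : EReal :=
  sSup {x : EReal | ∃ i ≤ t, x = aInv k n M dg i}

variable (k n) in
/-- The Castelnuovo–Mumford regularity `reg M = max_i { a_i(M) + i }`. -/
def cmReg : EReal :=
  sSup {x : EReal | ∃ i : ℕ, x = aInv k n M dg i + ((i : ℝ) : EReal)}

variable (k n) in
/-- The `a^*`-invariant `a^*(M) = max_i a_i(M)`. -/
def aStar : EReal :=
  sSup {x : EReal | ∃ i : ℕ, x = aInv k n M dg i}

/-- The canonical grading of a quotient `S/I` by a homogeneous ideal. -/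
def quotDeg (I : Ideal (MvPolynomial (Fin n) k)) (j : ℤ) :
    AddSubgroup ((MvPolynomial (Fin n) k) ⧸ I) :=
  if 0 ≤ j then
    AddSubgroup.map (Ideal.Quotient.mk I).toAddMonoidHom
      ((homogeneousSubmodule (Fin n) k j.toNat).toAddSubgroup)
  else ⊥

/-- The canonical grading of a homogeneous ideal `I ⊆ S`, viewed as an `S`-module. -/
def idealDeg (I : Ideal (MvPolynomial (Fin n) k)) (j : ℤ) : AddSubgroup I :=
  if 0 ≤ j then
    AddSubgroup.comap (Submodule.subtype I).toAddMonoidHom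
      ((homogeneousSubmodule (Fin n) k j.toNat).toAddSubgroup)
  else ⊥

variable (k n) in
/-- `a_i(S/I)` for a homogeneous ideal `I`. -/
def aQuot (I : Ideal (MvPolynomial (Fin n) k)) (i : ℕ) : EReal :=
  aInv k n ((MvPolynomial (Fin n) k) ⧸ I) (quotDeg I) i

variable (k n) in
/-- `a_i(I)` for a homogeneous ideal `I` viewed as a graded `S`-module. -/
def aIdealMod (I : Ideal (MvPolynomial (Fin n) k)) (i : ℕ) : EReal :=
  aInv k n I (idealDeg I) i


variable (k n) in
/-- `reg_t(S/I)` for a homogeneous ideal `I`. -/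
def regTQuot (I : Ideal (MvPolynomial (Fin n) k)) (t : ℕ) : EReal :=
  regT k n ((MvPolynomial (Fin n) k) ⧸ I) (quotDeg I) t

variable (k n) in
/-- `a*_t(S/I)` for a homogeneous ideal `I`. -/
def aStarTQuot (I : Ideal (MvPolynomial (Fin n) k)) (t : ℕ) : EReal :=
  aStarT k n ((MvPolynomial (Fin n) k) ⧸ I) (quotDeg I) t

variable (k n) in
/-- `reg(S/I)` for a homogeneous ideal `I`. -/
def cmRegQuot (I : Ideal (MvPolynomial (Fin n) k)) : EReal :=
  cmReg k n ((MvPolynomial (Fin n) k) ⧸ I) (quotDeg I)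

variable (k n) in
/-- `a^*(S/I)` for a homogeneous ideal `I`. -/
def aStarQuot (I : Ideal (MvPolynomial (Fin n) k)) : EReal :=
  aStar k n ((MvPolynomial (Fin n) k) ⧸ I) (quotDeg I)

variable (k n) in
/-- `reg_t(I)` for a homogeneous ideal `I` viewed as a graded module. -/
def regTIdeal (I : Ideal (MvPolynomial (Fin n) k)) (t : ℕ) : EReal :=
  regT k n I (idealDeg I) t

variable (k n) in
/-- `a*_t(I)` for a homogeneous ideal `I` viewed as a graded module. -/
def aStarTIdeal (I : Ideal (MvPolynomial (Fin n) k)) (t : ℕ) : EReal :=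
  aStarT k n I (idealDeg I) t

variable (k n) in
/-- `reg(I)`, the Castelnuovo–Mumford regularity of the ideal `I` as a graded module. -/
def cmRegIdeal (I : Ideal (MvPolynomial (Fin n) k)) : EReal :=
  cmReg k n I (idealDeg I)

variable (k n) in
/-- The depth of a module: the maximal length of a regular sequence contained in the
maximal graded ideal. -/
def moduleDepth (N : Type) [AddCommGroup N] [Module (MvPolynomial (Fin n) k) N] : ℕ :=
  sSup {d : ℕ | ∃ rs : List (MvPolynomial (Fin n) k), rs.length = d ∧
    (∀ r ∈ rs, r ∈ maxIdeal k n) ∧ RingTheory.Sequence.IsRegular N rs}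

variable (k n) in
/-- The (Krull) dimension of a module, i.e. of `S` modulo its annihilator. -/
def moduleDim (N : Type) [AddCommGroup N] [Module (MvPolynomial (Fin n) k) N] :
    WithBot ℕ∞ :=
  ringKrullDim ((MvPolynomial (Fin n) k) ⧸ Module.annihilator (MvPolynomial (Fin n) k) N)

variable (k n) in
/-- A Cohen–Macaulay module: zero, or of depth equal to its dimension. -/
def IsCMmod (N : Type) [AddCommGroup N] [Module (MvPolynomial (Fin n) k) N] : Prop :=
  Subsingleton N ∨ ((moduleDepth k n N : ℕ∞) : WithBot ℕ∞) = moduleDim k n N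

/-- The satiety `s(I^{sat}/I)`: the largest degree `j` with `(I^{sat}/I)_j ≠ 0`,
i.e. with `(I^{sat})_j ⊄ I_j`, as an extended real. -/
def satietyDeg {k : Type} [Field k] {n : ℕ} (I : Ideal (MvPolynomial (Fin n) k)) : EReal :=
  sSup {x : EReal | ∃ j : ℕ,
    (∃ f ∈ homogeneousSubmodule (Fin n) k j, f ∈ satur I ∧ f ∉ I) ∧ x = ((j : ℝ) : EReal)}

/-- Maximal degree of a minimal monomial generator. -/
def genDeg {k : Type} [Field k] {n : ℕ} (I : Ideal (MvPolynomial (Fin n) k)) : ℕ :=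
  sSup {d : ℕ | ∃ u ∈ minGens I, expDeg u = d}

/-- `m(u)`: the (1-based) largest index of a variable dividing the monomial `x^u`. -/
def mVal {n : ℕ} (u : Fin n →₀ ℕ) : ℕ :=
  u.support.sup (fun i => (i : ℕ) + 1)

variable (k n) in
/-- The degree-`t` part of a graded free module `⊕_j S(-d_j)`, realized as
`Fin r →₀ S`: the `j`-th coordinate must be homogeneous of degree `t - d j`. -/
def freeDeg (r : ℕ) (d : Fin r → ℤ) (t : ℤ) :
    AddSubgroup (Fin r →₀ MvPolynomial (Fin n) k) where
  carrier := {f | ∀ j : Fin r,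
    (0 ≤ t - d j → f j ∈ homogeneousSubmodule (Fin n) k (t - d j).toNat) ∧
    (t - d j < 0 → f j = 0)}
  zero_mem' := by
    intro j
    exact ⟨fun _ => by simp, fun _ => by simp⟩
  add_mem' := by
    intro a b ha hb j
    refine ⟨fun h => ?_, fun h => ?_⟩
    · simpa [Finsupp.add_apply] using add_mem ((ha j).1 h) ((hb j).1 h)
    · simp [Finsupp.add_apply, (ha j).2 h, (hb j).2 h]
  neg_mem' := by
    intro a ha j
    refine ⟨fun h => ?_, fun h => ?_⟩
    · simpa [Finsupp.neg_apply] using neg_mem ((ha j).1 h)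
    · simp [Finsupp.neg_apply, (ha j).2 h]

/-- A minimal graded free resolution
`0 → F_s → ⋯ → F_1 → F_0 → M → 0` of a graded module `M` (with grading `dg`),
where `F_i` is free with `rk i` generators of degrees `dgen i j`. -/
structure MinimalGradedFreeRes (dg : ℤ → AddSubgroup M) where
  /-- length of the resolution -/
  s : ℕ
  /-- ranks of the free modules -/
  rk : ℕ → ℕ
  /-- degrees of the generators -/
  dgen : (i : ℕ) → Fin (rk i) → ℤ
  /-- the differentials `F_{i+1} → F_i` -/
  φ : (i : ℕ) → (Fin (rk (i + 1)) →₀ MvPolynomial (Fin n) k) →ₗ[MvPolynomial (Fin n) k]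
      (Fin (rk i) →₀ MvPolynomial (Fin n) k)
  /-- the augmentation `F_0 → M` -/
  ε : (Fin (rk 0) →₀ MvPolynomial (Fin n) k) →ₗ[MvPolynomial (Fin n) k] M
  rk_eq_zero : ∀ i, s < i → rk i = 0
  ε_surj : Function.Surjective ε
  ε_graded : ∀ (t : ℤ) x, x ∈ freeDeg k n (rk 0) (dgen 0) t → ε x ∈ dg t
  φ_graded : ∀ (i : ℕ) (t : ℤ) x, x ∈ freeDeg k n (rk (i + 1)) (dgen (i + 1)) t →
    φ i x ∈ freeDeg k n (rk i) (dgen i) t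
  exact_aug : LinearMap.ker ε = LinearMap.range (φ 0)
  exact_mid : ∀ i : ℕ, LinearMap.ker (φ i) = LinearMap.range (φ (i + 1))
  minimal : ∀ (i : ℕ) x (j : Fin (rk i)), (φ i x) j ∈ maxIdeal k n


-- abbreviation
def spanMon (A : Set (Fin n →₀ ℕ)) : Ideal (MvPolynomial (Fin n) k) :=
  Ideal.span ((fun u => monomial u (1 : k)) '' A)

lemma mem_spanMon {A : Set (Fin n →₀ ℕ)} {f : MvPolynomial (Fin n) k} :
    f ∈ spanMon A ↔ ∀ u ∈ f.support, ∃ a ∈ A, a ≤ u :=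
  mem_ideal_span_monomial_image

lemma monomial_mem_spanMon {A : Set (Fin n →₀ ℕ)} {u : Fin n →₀ ℕ} :
    monomial u (1 : k) ∈ spanMon A ↔ ∃ a ∈ A, a ≤ u := by
  rw [mem_spanMon]
  classical
  constructor
  · intro h
    exact h u (by simp [support_monomial])
  · intro h v hv
    rw [support_monomial, if_neg (one_ne_zero)] at hv
    simp only [Finset.mem_singleton] at hv
    subst hv; exact h

lemma spanMon_le_spanMon {A B : Set (Fin n →₀ ℕ)} (h : ∀ a ∈ A, ∃ b ∈ B, b ≤ a) :
    (spanMon A : Ideal (MvPolynomial (Fin n) k)) ≤ spanMon B := by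
  rw [spanMon, Ideal.span_le]
  rintro f ⟨a, ha, rfl⟩
  exact monomial_mem_spanMon.mpr (h a ha)

lemma expDeg_eq_sum (u : Fin n →₀ ℕ) : expDeg u = ∑ i : Fin n, u i := by
  rw [expDeg, Finsupp.sum_fintype]
  intro; rfl

lemma expDeg_lt_of_lt {u v : Fin n →₀ ℕ} (hle : v ≤ u) (hne : v ≠ u) :
    expDeg v < expDeg u := by
  rw [expDeg_eq_sum, expDeg_eq_sum]
  have hle' := Finsupp.le_def.mp hle
  refine Finset.sum_lt_sum (fun i _ => hle' i) ?_
  by_contra hc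
  push_neg at hc
  exact hne (Finsupp.ext fun i => le_antisymm (hle' i) (hc i (Finset.mem_univ i)))

lemma exists_minGen {I : Ideal (MvPolynomial (Fin n) k)} {u : Fin n →₀ ℕ}
    (hu : monomial u (1 : k) ∈ I) : ∃ v ∈ minGens I, v ≤ u := by
  obtain ⟨d, hd⟩ : ∃ d, expDeg u ≤ d := ⟨expDeg u, le_rfl⟩
  induction d generalizing u with
  | zero =>
    refine ⟨u, ⟨hu, fun v hv hle => ?_⟩, le_rfl⟩
    by_contra hne
    have := expDeg_lt_of_lt hle hne
    omega
  | succ d ih =>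
    by_cases hmin : ∀ v : Fin n →₀ ℕ, monomial v (1 : k) ∈ I → v ≤ u → v = u
    · exact ⟨u, ⟨hu, hmin⟩, le_rfl⟩
    · push_neg at hmin
      obtain ⟨v, hvI, hvle, hvne⟩ := hmin
      obtain ⟨w, hw, hwle⟩ := ih hvI (by have := expDeg_lt_of_lt hvle hvne; omega)
      exact ⟨w, hw, hwle.trans hvle⟩

lemma spanMon_minGens {I : Ideal (MvPolynomial (Fin n) k)} (hI : IsMonomialIdeal I) :
    I = spanMon (minGens I) := by
  obtain ⟨A, hA⟩ := hI
  apply le_antisymm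
  · conv_lhs => rw [hA]
    refine spanMon_le_spanMon fun a ha => ?_
    have : monomial a (1 : k) ∈ I := by rw [hA]; exact Ideal.subset_span ⟨a, ha, rfl⟩
    exact exists_minGen this
  · rw [spanMon, Ideal.span_le]
    rintro f ⟨v, hv, rfl⟩
    exact hv.1

lemma minGens_subset {A : Set (Fin n →₀ ℕ)} {v : Fin n →₀ ℕ}
    (hv : v ∈ minGens (spanMon A : Ideal (MvPolynomial (Fin n) k))) : v ∈ A := by
  obtain ⟨a, ha, hale⟩ := monomial_mem_spanMon.mp hv.1
  have := hv.2 a (monomial_mem_spanMon.mpr ⟨a, ha, le_rfl⟩) hale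
  rwa [← this]

lemma colon_pow_monotone (I J : Ideal (MvPolynomial (Fin n) k)) :
    Monotone fun t : ℕ => Submodule.colon I ↑(J ^ t) := by
  intro s t hst
  exact Submodule.colon_mono le_rfl (Ideal.pow_le_pow_right hst)

lemma mem_infColon {I J : Ideal (MvPolynomial (Fin n) k)} {f : MvPolynomial (Fin n) k} :
    f ∈ infColon I J ↔ ∃ t : ℕ, f ∈ Submodule.colon I ↑(J ^ t) := by
  rw [infColon, Submodule.mem_iSup_of_directed _ (colon_pow_monotone I J).directed_le]

lemma mem_infColon_singleton {I : Ideal (MvPolynomial (Fin n) k)}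
    {g f : MvPolynomial (Fin n) k} :
    f ∈ infColon I (Ideal.span {g}) ↔ ∃ t : ℕ, g ^ t * f ∈ I := by
  rw [mem_infColon]
  refine exists_congr fun t => ?_
  rw [Ideal.span_singleton_pow, Ideal.mem_colon_span_singleton, mul_comm]

lemma le_infColon (I J : Ideal (MvPolynomial (Fin n) k)) : I ≤ infColon I J := by
  refine le_trans ?_ (le_iSup _ 0)
  intro f hf
  rw [Submodule.mem_colon]
  intro p hp
  exact Ideal.mul_mem_right p I hf

lemma fg_le_iSup {F : ℕ → Ideal (MvPolynomial (Fin n) k)} (hmono : Monotone F)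
    {J : Ideal (MvPolynomial (Fin n) k)} (hJ : J.FG) (h : J ≤ ⨆ t, F t) :
    ∃ t, J ≤ F t := by
  classical
  obtain ⟨s, rfl⟩ := hJ
  induction s using Finset.induction_on with
  | empty => exact ⟨0, by simp⟩
  | @insert a s _ ih =>
    have h' : Ideal.span (s : Set _) ≤ ⨆ t, F t :=
      le_trans (Ideal.span_mono (by simp)) h
    obtain ⟨t1, ht1⟩ := ih h'
    have ha : a ∈ ⨆ t, F t := h (Ideal.subset_span (by simp))
    rw [Submodule.mem_iSup_of_directed _ hmono.directed_le] at ha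
    obtain ⟨t2, ht2⟩ := ha
    refine ⟨max t1 t2, ?_⟩
    rw [Finset.coe_insert, Ideal.span_insert, sup_le_iff, Ideal.span_singleton_le_iff_mem]
    exact ⟨hmono (le_max_right t1 t2) ht2, le_trans ht1 (hmono (le_max_left t1 t2))⟩

lemma infColon_exists_pow {I J : Ideal (MvPolynomial (Fin n) k)} :
    ∃ t, infColon I J ≤ Submodule.colon I ↑(J ^ t) := by
  refine fg_le_iSup (colon_pow_monotone I J) ?_ le_rfl
  exact IsNoetherian.noetherian _

lemma mem_infColon_infColon {I J₁ J₂ : Ideal (MvPolynomial (Fin n) k)}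
    {f : MvPolynomial (Fin n) k} :
    f ∈ infColon (infColon I J₁) J₂ ↔
      ∃ s t : ℕ, ∀ g ∈ J₂ ^ s, ∀ h ∈ J₁ ^ t, h * (g * f) ∈ I := by
  constructor
  · intro hf
    rw [mem_infColon] at hf
    obtain ⟨s, hs⟩ := hf
    rw [Submodule.mem_colon] at hs
    -- every g in J₂^s : g * f ∈ infColon I J₁
    have hg : ∀ g ∈ J₂ ^ s, g * f ∈ infColon I J₁ := by
      intro g hgmem
      have := hs g hgmem
      rwa [smul_eq_mul, mul_comm] at this
    -- uniformize t
    have hle : J₂ ^ s ≤ ⨆ t, Submodule.colon (Submodule.colon I ↑(J₁ ^ t)) ↑(Ideal.span {f}) := by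
      intro g hgmem
      have := hg g hgmem
      rw [mem_infColon] at this
      obtain ⟨t, ht⟩ := this
      refine Submodule.mem_iSup_of_mem t ?_
      rwa [Ideal.mem_colon_span_singleton]
    have hFG : (J₂ ^ s).FG := IsNoetherian.noetherian _
    obtain ⟨t, ht⟩ := fg_le_iSup
      (fun t₁ t₂ h12 => Submodule.colon_mono (colon_pow_monotone I J₁ h12) le_rfl) hFG hle
    refine ⟨s, t, fun g hgm h hhm => ?_⟩
    have := ht hgm
    rw [Ideal.mem_colon_span_singleton] at this
    rw [Submodule.mem_colon] at this
    have := this h hhm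
    rwa [smul_eq_mul, mul_comm (g * f) h] at this
  · rintro ⟨s, t, hst⟩
    rw [mem_infColon]
    refine ⟨s, ?_⟩
    rw [Submodule.mem_colon]
    intro g hgm
    rw [smul_eq_mul, mul_comm]
    refine Submodule.mem_iSup_of_mem t ?_
    rw [Submodule.mem_colon]
    intro h hhm
    rw [smul_eq_mul, mul_comm (g*f) h]
    exact hst g hgm h hhm

lemma infColon_comm (I J₁ J₂ : Ideal (MvPolynomial (Fin n) k)) :
    infColon (infColon I J₁) J₂ = infColon (infColon I J₂) J₁ := by
  ext f
  rw [mem_infColon_infColon, mem_infColon_infColon]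
  constructor
  · rintro ⟨s, t, h⟩
    exact ⟨t, s, fun g hg h' hh' => by
      have := h h' hh' g hg
      rwa [show g * (h' * f) = h' * (g * f) by ring] at this⟩
  · rintro ⟨s, t, h⟩
    exact ⟨t, s, fun g hg h' hh' => by
      have := h h' hh' g hg
      rwa [show g * (h' * f) = h' * (g * f) by ring] at this⟩

def PP (m : Fin n) : Ideal (MvPolynomial (Fin n) k) :=
  Ideal.span {f | ∃ j ≤ m, f = X j}

lemma PP_eq (m : Fin n) :
    (PP m : Ideal (MvPolynomial (Fin n) k)) = Ideal.span (X '' {j | j ≤ m}) := by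
  rw [PP]
  congr 1
  ext f
  constructor
  · rintro ⟨j, hj, rfl⟩; exact ⟨j, hj, rfl⟩
  · rintro ⟨j, hj, rfl⟩; exact ⟨j, hj, rfl⟩

lemma mem_PP {m : Fin n} {f : MvPolynomial (Fin n) k} :
    f ∈ (PP m : Ideal (MvPolynomial (Fin n) k)) ↔
      ∀ u ∈ f.support, ∃ j ≤ m, u j ≠ 0 := by
  rw [PP_eq, mem_ideal_span_X_image]
  simp only [Set.mem_setOf_eq]

lemma X_mem_PP {m i : Fin n} :
    (X i : MvPolynomial (Fin n) k) ∈ (PP m : Ideal (MvPolynomial (Fin n) k)) ↔ i ≤ m := by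
  constructor
  · intro h
    rw [mem_PP] at h
    obtain ⟨j, hj, hne⟩ := h (Finsupp.single i 1) (by rw [support_X]; simp)
    rw [Finsupp.single_apply] at hne
    rcases eq_or_ne i j with rfl | hij
    · exact hj
    · simp [hij] at hne
  · intro h
    exact Ideal.subset_span ⟨i, h, rfl⟩

lemma monomial_mem_PP {m : Fin n} {u : Fin n →₀ ℕ} {c : k} (hc : c ≠ 0) :
    monomial u c ∈ (PP m : Ideal (MvPolynomial (Fin n) k)) ↔ ∃ j ≤ m, u j ≠ 0 := by
  classical
  rw [mem_PP]
  constructor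
  · intro h
    exact h u (by rw [support_monomial, if_neg hc]; simp)
  · intro h v hv
    rw [support_monomial, if_neg hc, Finset.mem_singleton] at hv
    subst hv; exact h

lemma PP_fg (m : Fin n) : (PP m : Ideal (MvPolynomial (Fin n) k)).FG := by
  rw [PP_eq]
  exact Submodule.fg_span ((Set.toFinite _).image _)

lemma PP_prime (m : Fin n) : (PP m : Ideal (MvPolynomial (Fin n) k)).IsPrime := by
  classical
  set φ : MvPolynomial (Fin n) k →+* MvPolynomial (Fin n) k :=
    (aeval (fun i : Fin n => if i ≤ m then 0 else X i)).toRingHom with hφ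
  have hker : (PP m : Ideal (MvPolynomial (Fin n) k)) = RingHom.ker φ := by
    apply le_antisymm
    · rw [PP, Ideal.span_le]
      rintro f ⟨j, hj, rfl⟩
      simp [hφ, RingHom.mem_ker, hj]
    · intro f hf
      rw [RingHom.mem_ker] at hf
      rw [mem_PP]
      intro u hu
      by_contra hcon
      push_neg at hcon
      -- u is supported in big variables; show coeff u (φ f) = coeff u f ≠ 0
      have hval : ∀ g : MvPolynomial (Fin n) k, coeff u (φ g) =
          ∑ v ∈ g.support.filter (fun v => ∀ j ≤ m, v j = 0), coeff u (monomial v (coeff v g)) := by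
        intro g
        conv_lhs => rw [g.as_sum]
        rw [map_sum]
        rw [← Finset.sum_filter_add_sum_filter_not g.support (fun v => ∀ j ≤ m, v j = 0)]
        have h1 : ∀ v ∈ g.support.filter (fun v => ∀ j ≤ m, v j = 0),
            φ (monomial v (coeff v g)) = monomial v (coeff v g) := by
          intro v hv
          rw [Finset.mem_filter] at hv
          rw [hφ]
          simp only [AlgHom.toRingHom_eq_coe, RingHom.coe_coe, aeval_monomial]
          rw [Finsupp.prod]
          have : ∀ i ∈ v.support, (if i ≤ m then (0:MvPolynomial (Fin n) k) else X i) ^ v i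
              = X i ^ v i := by
            intro i hi
            have : ¬ i ≤ m := fun hle => (Finsupp.mem_support_iff.mp hi) (hv.2 i hle)
            rw [if_neg this]
          rw [Finset.prod_congr rfl this, prod_X_pow_eq_monomial]
          rw [algebraMap_eq, C_mul_monomial, mul_one]
        have h2 : ∀ v ∈ g.support.filter (fun v => ¬ ∀ j ≤ m, v j = 0),
            φ (monomial v (coeff v g)) = 0 := by
          intro v hv
          rw [Finset.mem_filter] at hv
          obtain ⟨j, hj, hne⟩ := by push_neg at hv; exact hv.2
          rw [hφ]
          simp only [AlgHom.toRingHom_eq_coe, RingHom.coe_coe, aeval_monomial]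
          rw [Finsupp.prod]
          rw [Finset.prod_eq_zero (Finsupp.mem_support_iff.mpr hne)]
          · ring
          · rw [if_pos hj, zero_pow hne]
        rw [Finset.sum_congr rfl h1, Finset.sum_congr rfl h2, Finset.sum_const_zero, add_zero,
          coeff_sum]
      have := hval f
      rw [hf] at this
      simp only [coeff_zero] at this
      rw [Finset.sum_congr rfl (fun v hv => coeff_monomial u v (coeff v f))] at this
      rw [Finset.sum_ite_eq' _ u _] at this
      rw [if_pos (by rw [Finset.mem_filter]; exact ⟨hu, hcon⟩)] at this
      exact Finsupp.mem_support_iff.mp hu this.symm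
  rw [hker]
  exact RingHom.ker_isPrime φ

lemma infColon_spanMon_X (A : Set (Fin n →₀ ℕ)) (j : Fin n) :
    infColon (spanMon A : Ideal (MvPolynomial (Fin n) k)) (Ideal.span {X j}) =
      spanMon ((fun a => a.erase j) '' A) := by
  apply le_antisymm
  · intro f hf
    obtain ⟨t, ht⟩ := mem_infColon_singleton.mp hf
    rw [mem_spanMon]
    intro u hu
    have hcoeff : coeff (Finsupp.single j t + u) ((X j : MvPolynomial (Fin n) k) ^ t * f) ≠ 0 := by
      rw [X_pow_eq_monomial, coeff_monomial_mul, one_mul]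
      exact Finsupp.mem_support_iff.mp hu
    have hmem := mem_spanMon.mp ht _ (Finsupp.mem_support_iff.mpr hcoeff)
    obtain ⟨a, ha, hale⟩ := hmem
    refine ⟨a.erase j, ⟨a, ha, rfl⟩, ?_⟩
    intro i
    rcases eq_or_ne i j with rfl | hij
    · simp [Finsupp.erase_same]
    · have := Finsupp.le_def.mp hale i
      rw [Finsupp.erase_ne hij]
      rw [Finsupp.add_apply, Finsupp.single_apply, if_neg (fun h => hij h.symm)] at this
      omega
  · rw [spanMon, Ideal.span_le]
    rintro g ⟨w, ⟨a, ha, rfl⟩, rfl⟩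
    rw [SetLike.mem_coe, mem_infColon_singleton]
    refine ⟨a j, ?_⟩
    rw [X_pow_eq_monomial, monomial_mul, one_mul, Finsupp.single_add_erase]
    exact Ideal.subset_span ⟨a, ha, rfl⟩

lemma nzd {m : Fin n} {B : Set (Fin n →₀ ℕ)} (hB : ∀ b ∈ B, ∀ i ∈ b.support, i ≤ m)
    {f x : MvPolynomial (Fin n) k} (hf : f ∉ (PP m : Ideal (MvPolynomial (Fin n) k)))
    (hfx : f * x ∈ (spanMon B : Ideal (MvPolynomial (Fin n) k))) :
    x ∈ (spanMon B : Ideal (MvPolynomial (Fin n) k)) := by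
  classical
  by_contra hx
  set sdeg : (Fin n →₀ ℕ) → ℕ := fun u => ∑ i : Fin n, if i ≤ m then u i else 0 with hsdeg
  have sdeg_add : ∀ a b, sdeg (a + b) = sdeg a + sdeg b := by
    intro a b
    rw [hsdeg, ← Finset.sum_add_distrib]
    refine Finset.sum_congr rfl fun i _ => ?_
    by_cases h : i ≤ m <;> simp [h]
  have sdeg_zero : ∀ a : Fin n →₀ ℕ, sdeg a = 0 ↔ ∀ i ≤ m, a i = 0 := by
    intro a
    rw [hsdeg, Finset.sum_eq_zero_iff]
    constructor
    · intro h i hi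
      have := h i (Finset.mem_univ i)
      rwa [if_pos hi] at this
    · intro h i _
      by_cases hi : i ≤ m <;> simp [hi, h]
  set InJ : (Fin n →₀ ℕ) → Prop := fun u => ∃ b ∈ B, b ≤ u with hInJ
  have InJ_mono : ∀ {a b : Fin n →₀ ℕ}, a ≤ b → InJ a → InJ b := by
    rintro a b hab ⟨c, hc, hca⟩
    exact ⟨c, hc, hca.trans hab⟩
  have InJ_key : ∀ a b : Fin n →₀ ℕ, sdeg a = 0 → (InJ (a + b) ↔ InJ b) := by
    intro a b ha
    constructor
    · rintro ⟨c, hc, hcab⟩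
      refine ⟨c, hc, fun i => ?_⟩
      by_cases hi : i ≤ m
      · have := Finsupp.le_def.mp hcab i
        rw [Finsupp.add_apply] at this
        have := (sdeg_zero a).mp ha i hi
        omega
      · have : c i = 0 := by
          by_contra hne
          exact hi (hB c hc i (Finsupp.mem_support_iff.mpr hne))
        omega
    · exact fun h => InJ_mono le_add_self h
  set X' := x.support.filter (fun u => ¬ InJ u) with hX'
  have hX'ne : X'.Nonempty := by
    rw [mem_spanMon] at hx
    push_neg at hx
    obtain ⟨u, hu, hnin⟩ := hx
    exact ⟨u, Finset.mem_filter.mpr ⟨hu, fun ⟨b, hb, hble⟩ => (hnin b hb) hble⟩⟩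
  set d := X'.inf' hX'ne sdeg with hd
  set Xd := X'.filter (fun u => sdeg u = d) with hXd
  set F0 := f.support.filter (fun v => sdeg v = 0) with hF0
  have hF0ne : F0.Nonempty := by
    rw [mem_PP] at hf
    push_neg at hf
    obtain ⟨v, hv, hvz⟩ := hf
    refine ⟨v, Finset.mem_filter.mpr ⟨hv, (sdeg_zero v).mpr ?_⟩⟩
    intro i hi
    by_contra hne
    exact hne (hvz i hi)
  set f0 : MvPolynomial (Fin n) k := ∑ v ∈ F0, monomial v (coeff v f) with hf0def
  set x0 : MvPolynomial (Fin n) k := ∑ u ∈ Xd, monomial u (coeff u x) with hx0def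
  have coeff_f0 : ∀ w, coeff w f0 = if w ∈ F0 then coeff w f else 0 := by
    intro w
    rw [hf0def, coeff_sum]
    rw [Finset.sum_congr rfl (fun v _ => coeff_monomial w v (coeff v f))]
    rw [Finset.sum_ite_eq' F0 w (fun v => coeff v f)]
  have coeff_x0 : ∀ w, coeff w x0 = if w ∈ Xd then coeff w x else 0 := by
    intro w
    rw [hx0def, coeff_sum]
    rw [Finset.sum_congr rfl (fun v _ => coeff_monomial w v (coeff v x))]
    rw [Finset.sum_ite_eq' Xd w (fun v => coeff v x)]
  have hf0ne : f0 ≠ 0 := by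
    obtain ⟨v, hv⟩ := hF0ne
    intro h0
    have := coeff_f0 v
    rw [h0, coeff_zero, if_pos hv] at this
    exact Finsupp.mem_support_iff.mp (Finset.mem_filter.mp hv).1 this.symm
  have hXdne : Xd.Nonempty := by
    obtain ⟨u, hu, hud⟩ := Finset.exists_mem_eq_inf' hX'ne sdeg
    exact ⟨u, Finset.mem_filter.mpr ⟨hu, hud.symm⟩⟩
  have hx0ne : x0 ≠ 0 := by
    obtain ⟨u, hu⟩ := hXdne
    intro h0
    have := coeff_x0 u
    rw [h0, coeff_zero, if_pos hu] at this
    exact Finsupp.mem_support_iff.mp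
      (Finset.mem_filter.mp (Finset.mem_filter.mp hu).1).1 this.symm
  have hprodne : f0 * x0 ≠ 0 := mul_ne_zero hf0ne hx0ne
  obtain ⟨w, hw⟩ := support_nonempty.mpr hprodne
  have hwdec : ∃ a ∈ F0, ∃ b ∈ Xd, a + b = w := by
    have hsub := support_mul f0 x0 hw
    rw [Finset.mem_add] at hsub
    obtain ⟨a, ha, b, hb, hab⟩ := hsub
    have haF : a ∈ F0 := by
      by_contra hc
      have := coeff_f0 a
      rw [if_neg hc] at this
      exact Finsupp.mem_support_iff.mp ha this
    have hbX : b ∈ Xd := by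
      by_contra hc
      have := coeff_x0 b
      rw [if_neg hc] at this
      exact Finsupp.mem_support_iff.mp hb this
    exact ⟨a, haF, b, hbX, hab⟩
  obtain ⟨a0, ha0, b0, hb0, hab0⟩ := hwdec
  have hsw : sdeg w = d := by
    rw [← hab0, sdeg_add]
    have h1 := (Finset.mem_filter.mp ha0).2
    have h2 := (Finset.mem_filter.mp hb0).2
    omega
  have hnInJw : ¬ InJ w := by
    rw [← hab0, InJ_key a0 b0 (Finset.mem_filter.mp ha0).2]
    exact (Finset.mem_filter.mp (Finset.mem_filter.mp hb0).1).2
  have hceq : coeff w (f * x) = coeff w (f0 * x0) := by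
    rw [coeff_mul, coeff_mul]
    refine Finset.sum_congr rfl ?_
    rintro ⟨a, b⟩ hab
    rw [Finset.HasAntidiagonal.mem_antidiagonal] at hab
    simp only
    rw [coeff_f0, coeff_x0]
    by_cases ha : a ∈ F0
    · by_cases hb : b ∈ Xd
      · rw [if_pos ha, if_pos hb]
      · rw [if_neg hb, mul_zero]
        by_contra hne
        have hbx : b ∈ x.support := by
          rw [MvPolynomial.mem_support_iff]
          intro h0
          exact hne (by rw [h0, mul_zero])
        have hbX' : b ∈ X' := by
          refine Finset.mem_filter.mpr ⟨hbx, fun hInJb => hnInJw (InJ_mono ?_ hInJb)⟩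
          rw [← hab]; exact le_add_self
        have hdle : d ≤ sdeg b := Finset.inf'_le sdeg hbX'
        have : sdeg a + sdeg b = d := by rw [← sdeg_add, hab, hsw]
        exact hb (Finset.mem_filter.mpr ⟨hbX', by omega⟩)
    · rw [if_neg ha, zero_mul]
      by_contra hne
      have haf : a ∈ f.support := by
        rw [MvPolynomial.mem_support_iff]
        intro h0
        exact hne (by rw [h0, zero_mul])
      have hbx : b ∈ x.support := by
        rw [MvPolynomial.mem_support_iff]
        intro h0
        exact hne (by rw [h0, mul_zero])
      have hbX' : b ∈ X' := by
        refine Finset.mem_filter.mpr ⟨hbx, fun hInJb => hnInJw (InJ_mono ?_ hInJb)⟩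
        rw [← hab]; exact le_add_self
      have hdle : d ≤ sdeg b := Finset.inf'_le sdeg hbX'
      have hsum : sdeg a + sdeg b = d := by rw [← sdeg_add, hab, hsw]
      exact ha (Finset.mem_filter.mpr ⟨haf, by omega⟩)
  have hwne : coeff w (f * x) ≠ 0 := by
    rw [hceq]
    exact Finsupp.mem_support_iff.mp hw
  have := mem_spanMon.mp hfx w (Finsupp.mem_support_iff.mpr hwne)
  exact hnInJw this

section AssHelpers
variable {R : Type*} [CommRing R] {M : Type*} [AddCommGroup M] [Module R M]

lemma mem_colonBot {r : R} {x : M} :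
    r ∈ (⊥ : Submodule R M).colon {x} ↔ r • x = 0 := by
  rw [Submodule.mem_colon_singleton, Submodule.mem_bot]

lemma ass_subset_union (N : Submodule R M) :
    associatedPrimes R M ⊆ associatedPrimes R N ∪ associatedPrimes R (M ⧸ N) :=
  associatedPrimes.subset_union_of_exact (Submodule.injective_subtype N)
    (LinearMap.exact_subtype_mkQ N)

lemma ass_submodule (N : Submodule R M) :
    associatedPrimes R N ⊆ associatedPrimes R M :=
  associatedPrimes.subset_of_injective (Submodule.injective_subtype N)

end AssHelpers

lemma ass_layer {I I' : Ideal (MvPolynomial (Fin n) k)} {m : Fin n}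
    (hImon : IsMonomialIdeal I)
    (hsupp : ∀ u ∈ minGens I, ∀ i ∈ u.support, i ≤ m)
    (hpow : ∃ t, I' ≤ Submodule.colon I ↑((PP m : Ideal (MvPolynomial (Fin n) k)) ^ t))
    {p : Ideal (MvPolynomial (Fin n) k)}
    (hp : IsAssociatedPrime p (Submodule.map (Submodule.mkQ (I : Submodule (MvPolynomial (Fin n) k) (MvPolynomial (Fin n) k))) (I' : Submodule (MvPolynomial (Fin n) k) (MvPolynomial (Fin n) k)))) :
    p = PP m := by
  obtain ⟨hprime, y, hy⟩ := isAssociatedPrime_iff.mp hp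
  obtain ⟨x, hxI', hxy⟩ := Submodule.mem_map.mp y.2
  apply le_antisymm
  · intro g hg
    by_contra hgP
    have hgy : g • y = 0 := by
      rw [hy, mem_colonBot] at hg
      exact hg
    have hgx : g * x ∈ I := by
      have : (g • y : _) = g • (y : MvPolynomial (Fin n) k ⧸ (I : Submodule (MvPolynomial (Fin n) k) (MvPolynomial (Fin n) k))) := rfl
      have hcoe : g • (y : MvPolynomial (Fin n) k ⧸ (I : Submodule (MvPolynomial (Fin n) k) (MvPolynomial (Fin n) k))) = 0 := by
        rw [← this, hgy]; rfl
      rw [← hxy, ← map_smul, Submodule.mkQ_apply, Submodule.Quotient.mk_eq_zero] at hcoe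
      exact hcoe
    have hxI : x ∈ I := by
      have hIspan := spanMon_minGens hImon
      rw [hIspan] at hgx ⊢
      exact nzd hsupp hgP hgx
    have hy0 : y = 0 := by
      apply Subtype.ext
      rw [← hxy, ZeroMemClass.coe_zero, Submodule.mkQ_apply, Submodule.Quotient.mk_eq_zero]
      exact hxI
    rw [hy0] at hy
    rw [Submodule.colon_singleton_zero] at hy
    exact hprime.ne_top hy
  · obtain ⟨t, ht⟩ := hpow
    intro g hg
    have hgt : g ^ t * x ∈ I := by
      have hx := ht hxI'
      rw [Submodule.mem_colon] at hx
      have := hx (g ^ t) (Ideal.pow_mem_pow hg t)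
      rwa [smul_eq_mul, mul_comm] at this
    have : g ^ t • y = 0 := by
      apply Subtype.ext
      show g ^ t • (y : MvPolynomial (Fin n) k ⧸ (I : Submodule (MvPolynomial (Fin n) k) (MvPolynomial (Fin n) k))) = 0
      rw [← hxy, ← map_smul, Submodule.mkQ_apply, Submodule.Quotient.mk_eq_zero]
      exact hgt
    have hgtp : g ^ t ∈ p := by
      rw [hy, mem_colonBot]
      exact this
    exact hprime.mem_of_pow_mem t hgtp


/-- The sequential chain of a Borel type monomial ideal has length
`≤ n`, strictly decreasing `n_l`, and `Ass(S/I) = {(x_1,…,x_{n_l}) : l < r}`. -/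
theorem sequential_chain_associated_primes
    {k : Type} [Field k] {n : ℕ} (I : Ideal (MvPolynomial (Fin n) k))
    (hI : IsMonomialIdeal I) (hB : IsBorelType I)
    (r : ℕ) (c : ℕ → Ideal (MvPolynomial (Fin n) k)) (nl : ℕ → Fin n)
    (h0 : c 0 = I) (hr : c r = ⊤) (hproper : ∀ l, l < r → c l ≠ ⊤)
    (hnl : ∀ l, l < r →
      (∀ u ∈ minGens (c l), ∀ i ∈ u.support, i ≤ nl l) ∧
      (∃ u ∈ minGens (c l), nl l ∈ u.support))
    (hstep : ∀ l, l < r → c (l + 1) = infColon (c l) (Ideal.span {(X (nl l) : MvPolynomial (Fin n) k)})) :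
    r ≤ n ∧ (∀ l, l + 1 < r → nl (l + 1) < nl l) ∧
    associatedPrimes (MvPolynomial (Fin n) k) ((MvPolynomial (Fin n) k) ⧸ I) =
      {P | ∃ l, l < r ∧ P = Ideal.span {f | ∃ j ≤ nl l, f = (X j : MvPolynomial (Fin n) k)}} := by
  classical
  -- key invariants along the chain
  have key : ∀ l, l ≤ r → IsMonomialIdeal (c l) ∧ IsBorelType (c l) ∧
      (∀ h ∈ c l, ∃ t : ℕ,
        (∏ j ∈ Finset.range l, X (nl j) : MvPolynomial (Fin n) k) ^ t * h ∈ I) := by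
    intro l
    induction l with
    | zero =>
      intro _
      refine ⟨by rw [h0]; exact hI, by rw [h0]; exact hB, fun h hh => ⟨0, by simpa using h0 ▸ hh⟩⟩
    | succ l ih =>
      intro hl1
      have hlr : l < r := by omega
      obtain ⟨hmon, hbor, hsat⟩ := ih (by omega)
      have hform : c (l + 1) = spanMon ((fun a => a.erase (nl l)) '' minGens (c l)) := by
        rw [hstep l hlr]
        conv_lhs => rw [spanMon_minGens hmon]
        exact infColon_spanMon_X _ _
      refine ⟨⟨_, hform⟩, ?_, ?_⟩
      · intro i
        rw [hstep l hlr]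
        calc infColon (infColon (c l) (Ideal.span {X (nl l)}))
              (Ideal.span {f | ∃ j ≤ i, f = X j})
            = infColon (infColon (c l) (Ideal.span {f | ∃ j ≤ i, f = X j}))
              (Ideal.span {X (nl l)}) := infColon_comm _ _ _
          _ = infColon (infColon (c l) (Ideal.span {X i})) (Ideal.span {X (nl l)}) := by
              rw [hbor i]
          _ = infColon (infColon (c l) (Ideal.span {X (nl l)})) (Ideal.span {X i}) :=
              infColon_comm _ _ _
      · intro h hh
        rw [hstep l hlr] at hh
        obtain ⟨s, hs⟩ := mem_infColon_singleton.mp hh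
        obtain ⟨t, ht⟩ := hsat _ hs
        refine ⟨t + s, ?_⟩
        rw [Finset.prod_range_succ]
        have heq : ((∏ j ∈ Finset.range l, X (nl j) : MvPolynomial (Fin n) k) * X (nl l)) ^ (t + s) * h
            = ((∏ j ∈ Finset.range l, X (nl j) : MvPolynomial (Fin n) k) ^ s * X (nl l) ^ t) *
              ((∏ j ∈ Finset.range l, X (nl j) : MvPolynomial (Fin n) k) ^ t * (X (nl l) ^ s * h)) := by
          ring
        rw [heq]
        exact Ideal.mul_mem_left _ _ ht
  -- minimal generators of the next step come from erasures
  have hminsub : ∀ l, l < r → ∀ v ∈ minGens (c (l + 1)),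
      ∃ u ∈ minGens (c l), u.erase (nl l) = v := by
    intro l hlr v hv
    have hform : c (l + 1) = spanMon ((fun a => a.erase (nl l)) '' minGens (c l)) := by
      rw [hstep l hlr]
      conv_lhs => rw [spanMon_minGens (key l (le_of_lt hlr)).1]
      exact infColon_spanMon_X _ _
    have hv' : v ∈ minGens (spanMon ((fun a => a.erase (nl l)) '' minGens (c l)) :
        Ideal (MvPolynomial (Fin n) k)) := hform ▸ hv
    exact minGens_subset hv'
  -- strict decrease
  have hdec : ∀ l, l + 1 < r → nl (l + 1) < nl l := by
    intro l hl
    obtain ⟨v, hv, hvsupp⟩ := (hnl (l + 1) hl).2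
    obtain ⟨u, hu, rfl⟩ := hminsub l (by omega) v hv
    rw [Finsupp.support_erase, Finset.mem_erase] at hvsupp
    exact lt_of_le_of_ne ((hnl l (by omega)).1 u hu _ hvsupp.2) hvsupp.1
  have hdect : ∀ j l, j < l → l < r → nl l < nl j := by
    intro j l hjl
    induction l with
    | zero => omega
    | succ l ih =>
      intro hlr
      rcases Nat.lt_succ_iff_lt_or_eq.mp hjl with h | h
      · exact lt_trans (hdec l hlr) (ih h (by omega))
      · subst h; exact hdec _ hlr
  -- r ≤ n
  have hrn : r ≤ n := by
    rcases Nat.eq_zero_or_pos r with h | h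
    · omega
    · have hnl0 : ∀ d l, l + d < r → d ≤ (nl l : ℕ) := by
        intro d
        induction d with
        | zero => exact fun _ _ => Nat.zero_le _
        | succ d ihd =>
          intro l hl
          have h1 := ihd (l + 1) (by omega)
          have h2 : (nl (l + 1) : ℕ) < (nl l : ℕ) := hdec l (by omega)
          omega
      have h1 := hnl0 (r - 1) 0 (by omega)
      have h2 := (nl 0).isLt
      omega
  refine ⟨hrn, hdec, ?_⟩
  -- chain inclusions
  have hchain : ∀ l, l < r → c l ≤ c (l + 1) := by
    intro l hl
    rw [hstep l hl]
    exact le_infColon _ _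
  have hchain' : ∀ l, l ≤ r → I ≤ c l := by
    intro l
    induction l with
    | zero => intro _; rw [h0]
    | succ l ih => intro hl; exact (ih (by omega)).trans (hchain l (by omega))
  -- power bound from Borel type
  have hpow : ∀ l, l < r → ∃ t, c (l + 1) ≤
      Submodule.colon (c l) ↑((PP (nl l) : Ideal (MvPolynomial (Fin n) k)) ^ t) := by
    intro l hl
    have hb := (key l (le_of_lt hl)).2.1 (nl l)
    have hcP : c (l + 1) = infColon (c l) (PP (nl l)) := by
      rw [hstep l hl, ← hb]; rfl
    obtain ⟨t, ht⟩ := infColon_exists_pow (I := c l) (J := PP (nl l))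
    exact ⟨t, by rw [hcP]; exact ht⟩
  -- the subset direction, by descending induction
  have hsubset : ∀ d l, l + d = r →
      associatedPrimes (MvPolynomial (Fin n) k) ((MvPolynomial (Fin n) k) ⧸ c l) ⊆
        {P | ∃ j, l ≤ j ∧ j < r ∧ P = PP (nl j)} := by
    intro d
    induction d with
    | zero =>
      intro l hl
      have hceq : c l = ⊤ := by rw [show l = r by omega]; exact hr
      haveI : Subsingleton ((MvPolynomial (Fin n) k) ⧸ c l) :=
        Submodule.Quotient.subsingleton_iff.mpr hceq
      rw [associatedPrimes.eq_empty_of_subsingleton]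
      exact Set.empty_subset _
    | succ d ih =>
      intro l hl
      have hlr : l < r := by omega
      intro p hp
      rcases ass_subset_union (Submodule.map (Submodule.mkQ (c l)) (c (l + 1))) hp with
        hleft | hright
      · exact ⟨l, le_rfl, hlr, ass_layer (key l (le_of_lt hlr)).1 ((hnl l hlr).1)
          (hpow l hlr) hleft⟩
      · have hequiv := Submodule.quotientQuotientEquivQuotient
          (c l : Submodule (MvPolynomial (Fin n) k) (MvPolynomial (Fin n) k))
          (c (l + 1)) (hchain l hlr)
        rw [LinearEquiv.AssociatedPrimes.eq hequiv] at hright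
        obtain ⟨j, hj1, hj2, hj3⟩ := ih (l + 1) (by omega) hright
        exact ⟨j, by omega, hj2, hj3⟩
  -- the superset direction
  have hsup : ∀ l, l < r → (PP (nl l) : Ideal (MvPolynomial (Fin n) k)) ∈
      associatedPrimes (MvPolynomial (Fin n) k) ((MvPolynomial (Fin n) k) ⧸ I) := by
    intro l hlr
    obtain ⟨u, hu, hunl⟩ := (hnl l hlr).2
    set w := u.erase (nl l) with hw
    have hwI' : monomial w (1 : k) ∈ c (l + 1) := by
      rw [hstep l hlr]
      refine mem_infColon_singleton.mpr ⟨u (nl l), ?_⟩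
      rw [X_pow_eq_monomial, monomial_mul, one_mul, Finsupp.single_add_erase]
      exact hu.1
    have hwnot : monomial w (1 : k) ∉ c l := by
      intro hmem
      obtain ⟨v, hv, hvle⟩ := exists_minGen hmem
      have hwu : w ≤ u := by
        intro i
        rcases eq_or_ne i (nl l) with rfl | hne
        · simp [hw, Finsupp.erase_same]
        · simp [hw, Finsupp.erase_ne hne]
      have hv_eq : v = u := hu.2 v hv.1 (hvle.trans hwu)
      have := Finsupp.le_def.mp hvle (nl l)
      rw [hv_eq, hw, Finsupp.erase_same] at this
      rw [Finsupp.mem_support_iff] at hunl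
      omega
    set N := Submodule.map (Submodule.mkQ (c l)) (c (l + 1) :
      Submodule (MvPolynomial (Fin n) k) (MvPolynomial (Fin n) k)) with hN
    have hy0mem : (Submodule.mkQ (c l)) (monomial w (1 : k)) ∈ N :=
      Submodule.mem_map.mpr ⟨monomial w (1 : k), hwI', rfl⟩
    haveI : Nontrivial N := by
      refine nontrivial_of_ne ⟨_, hy0mem⟩ 0 ?_
      intro hcontra
      apply hwnot
      have h' : (Submodule.mkQ (c l)) ((monomial w) (1 : k)) = 0 :=
        ZeroMemClass.coe_eq_zero.mpr hcontra
      rwa [Submodule.mkQ_apply, Submodule.Quotient.mk_eq_zero] at h'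
    obtain ⟨p, hp⟩ := associatedPrimes.nonempty (MvPolynomial (Fin n) k) N
    have hpP : p = PP (nl l) := ass_layer (key l (le_of_lt hlr)).1 ((hnl l hlr).1)
      (hpow l hlr) hp
    have hpin : IsAssociatedPrime (PP (nl l) : Ideal (MvPolynomial (Fin n) k))
        ((MvPolynomial (Fin n) k) ⧸ c l) := hpP ▸ (ass_submodule N hp)
    obtain ⟨hprime, xb, hxb⟩ := isAssociatedPrime_iff.mp hpin
    obtain ⟨x, rfl⟩ := Submodule.mkQ_surjective _ xb
    have hPx : ∀ g ∈ (PP (nl l) : Ideal (MvPolynomial (Fin n) k)), g * x ∈ c l := by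
      intro g hg
      rw [hxb, mem_colonBot, ← map_smul, Submodule.mkQ_apply,
        Submodule.Quotient.mk_eq_zero] at hg
      exact hg
    set y : MvPolynomial (Fin n) k := ∏ j ∈ Finset.range l, X (nl j) with hy
    have hynot : y ∉ (PP (nl l) : Ideal (MvPolynomial (Fin n) k)) := by
      intro hmem
      rw [hy] at hmem
      obtain ⟨j, hj, hXj⟩ := ((PP_prime (nl l)).prod_mem_iff).mp hmem
      rw [Finset.mem_range] at hj
      have := X_mem_PP.mp hXj
      exact absurd this (not_le.mpr (hdect j l hj hlr))
    have hcly : c l ≤ infColon I (Ideal.span {y}) := by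
      intro h hh
      exact mem_infColon_singleton.mpr ((key l (le_of_lt hlr)).2.2 h hh)
    have hPxle : (PP (nl l) : Ideal (MvPolynomial (Fin n) k)) * Ideal.span {x} ≤
        ⨆ t : ℕ, Submodule.colon I ↑(Ideal.span {y} ^ t) := by
      rw [Ideal.mul_le]
      intro g hg s hs
      obtain ⟨a, rfl⟩ := Ideal.mem_span_singleton'.mp hs
      have : g * (a * x) = a * (g * x) := by ring
      rw [this]
      exact hcly (Ideal.mul_mem_left _ _ (hPx g hg))
    obtain ⟨T, hT⟩ := fg_le_iSup (colon_pow_monotone I (Ideal.span {y}))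
      (Submodule.FG.mul (PP_fg (nl l)) (Submodule.fg_span_singleton x)) hPxle
    set z : MvPolynomial (Fin n) k := y ^ T * x with hz
    refine AssociatedPrimes.mem_iff.mpr (isAssociatedPrime_iff.mpr ⟨PP_prime (nl l), Submodule.mkQ I z, ?_⟩)
    ext g
    rw [mem_colonBot, ← map_smul, Submodule.mkQ_apply,
      Submodule.Quotient.mk_eq_zero]
    constructor
    · intro hg
      have hgx : g * x ∈ (PP (nl l) : Ideal (MvPolynomial (Fin n) k)) * Ideal.span {x} :=
        Ideal.mul_mem_mul hg (Ideal.mem_span_singleton_self x)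
      have := hT hgx
      rw [Submodule.mem_colon] at this
      have hyT : y ^ T ∈ Ideal.span {y} ^ T := by
        rw [Ideal.span_singleton_pow]
        exact Ideal.mem_span_singleton_self _
      have h2 := this (y ^ T) hyT
      rw [smul_eq_mul] at h2
      have heq : g • z = g * x * y ^ T := by rw [hz, smul_eq_mul]; ring
      rw [heq]
      exact h2
    · intro hg
      have hgz : g * z ∈ c l := hchain' l (le_of_lt hlr) (by
        rw [smul_eq_mul] at hg; exact hg)
      have hgy : (g * y ^ T) * x ∈ c l := by
        have : (g * y ^ T) * x = g * z := by rw [hz]; ring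
        rw [this]; exact hgz
      have hmem : g * y ^ T ∈ (PP (nl l) : Ideal (MvPolynomial (Fin n) k)) := by
        rw [hxb, mem_colonBot, ← map_smul, Submodule.mkQ_apply,
          Submodule.Quotient.mk_eq_zero]
        exact hgy
      rcases (PP_prime (nl l)).mem_or_mem hmem with h | h
      · exact h
      · exact absurd ((PP_prime (nl l)).mem_of_pow_mem T h) hynot
  -- conclude
  ext P
  constructor
  · intro hP
    have hP0 : P ∈ associatedPrimes (MvPolynomial (Fin n) k)
        ((MvPolynomial (Fin n) k) ⧸ c 0) := by rwa [h0]
    obtain ⟨j, _, hj2, hj3⟩ := hsubset r 0 (by omega) hP0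
    exact ⟨j, hj2, hj3⟩
  · rintro ⟨l, hlr, rfl⟩
    exact hsup l hlr

end
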